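/- Let A be an m × 2 integer matrix and n ≥ 1. Every square submatrix of A ⊗ D(K_n) of order at least 2n − 1 has determinant zero. -/

import Mathlib

open Matrix Kronecker

/-- Edges of the complete graph `K_n`. -/
def CompEdge (n : ℕ) := {e : Fin n × Fin n // e.1 < e.2}

instance (n : ℕ) : Fintype (CompEdge n) := by unfold CompEdge; infer_instance
instance (n : ℕ) : DecidableEq (CompEdge n) := by unfold CompEdge; infer_instance

/-- Incidence matrix of the complete graph `K_n`. -/
def incK (n : ℕ) : Matrix (Fin n) (CompEdge n) ℤ :=
  fun v e => if v = e.1.1 then 1 else if v = e.1.2 then -1 else 0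

open Kronecker

/-- Left factor of the incidence matrix over ℚ: columns `e_j - e_{n-1}`. -/
def Fmat (n : ℕ) : Matrix (Fin n) (Fin (n - 1)) ℚ :=
  fun v j => (if (v : ℕ) = (j : ℕ) then 1 else 0) - (if (v : ℕ) = n - 1 then 1 else 0)

/-- Right factor of the incidence matrix over ℚ. -/
def Gmat (n : ℕ) : Matrix (Fin (n - 1)) (CompEdge n) ℚ :=
  fun j e => (if (e.1.1 : ℕ) = (j : ℕ) then 1 else 0) - (if (e.1.2 : ℕ) = (j : ℕ) then 1 else 0)

lemma sum_ite_val (n : ℕ) (k : ℕ) (c : Fin (n - 1) → ℚ) :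
    (∑ j : Fin (n - 1), (if k = (j : ℕ) then (1 : ℚ) else 0) * c j) =
      if h : k < n - 1 then c ⟨k, h⟩ else 0 := by
  split_ifs with h
  · rw [Finset.sum_eq_single (⟨k, h⟩ : Fin (n - 1))]
    · simp
    · intro j _ hj
      have : k ≠ (j : ℕ) := by
        intro hk
        exact hj (by apply Fin.ext; simp [← hk])
      simp [this]
    · simp
  · apply Finset.sum_eq_zero
    intro j _
    have : k ≠ (j : ℕ) := by
      intro hk
      exact h (hk ▸ j.isLt)
    simp [this]

lemma sum4 (n v a b : ℕ) (hb : b < n) (hab : a < b) :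
    (∑ j : Fin (n - 1), ((if v = (j : ℕ) then (1 : ℚ) else 0) - (if v = n - 1 then 1 else 0)) *
        ((if a = (j : ℕ) then 1 else 0) - (if b = (j : ℕ) then 1 else 0))) =
      if v = a then 1 else if v = b then -1 else 0 := by
  have ha : a < n - 1 := by omega
  have expand : ∀ j : Fin (n - 1),
      ((if v = (j : ℕ) then (1 : ℚ) else 0) - (if v = n - 1 then 1 else 0)) *
        ((if a = (j : ℕ) then 1 else 0) - (if b = (j : ℕ) then 1 else 0)) =
      (if v = (j : ℕ) then (1 : ℚ) else 0) *
          ((if a = (j : ℕ) then 1 else 0) - (if b = (j : ℕ) then 1 else 0))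
        - (if a = (j : ℕ) then (1 : ℚ) else 0) * (if v = n - 1 then 1 else 0)
        + (if b = (j : ℕ) then (1 : ℚ) else 0) * (if v = n - 1 then 1 else 0) := by
    intro j; ring
  rw [Finset.sum_congr rfl fun j _ => expand j, Finset.sum_add_distrib,
    Finset.sum_sub_distrib, sum_ite_val, sum_ite_val, sum_ite_val]
  rw [dif_pos ha]
  by_cases hv : v < n - 1
  · rw [dif_pos hv]
    by_cases hbn : b < n - 1
    · rw [dif_pos hbn]
      have hvn : v ≠ n - 1 := by omega
      simp only [hvn, if_false]
      split_ifs <;> norm_num <;> omega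
    · rw [dif_neg hbn]
      have hvn : v ≠ n - 1 := by omega
      have hvb : v ≠ b := by omega
      simp only [hvn, hvb, if_false]
      split_ifs <;> norm_num <;> omega
  · rw [dif_neg hv]
    by_cases hbn : b < n - 1
    · rw [dif_pos hbn]
      have hvb : v = b → False := by omega
      have hva : v = a → False := by omega
      split_ifs <;> (try norm_num) <;> omega
    · rw [dif_neg hbn]
      split_ifs <;> (try norm_num) <;> omega

/-- Factorization of the (ℚ-valued) incidence matrix through `Fin (n-1)`. -/
lemma incK_factor (n : ℕ) : (incK n).map (Int.cast : ℤ → ℚ) = Fmat n * Gmat n := by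
  ext v e
  rw [Matrix.mul_apply, Matrix.map_apply]
  obtain ⟨⟨a, b⟩, hab⟩ := e
  have hab' : (a : ℕ) < (b : ℕ) := hab
  have h := sum4 n (v : ℕ) (a : ℕ) (b : ℕ) b.isLt hab'
  simp only [incK, Fmat, Gmat]
  rw [h]
  have h1 : (v = a) ↔ ((v : ℕ) = (a : ℕ)) := Fin.ext_iff
  have h2 : (v = b) ↔ ((v : ℕ) = (b : ℕ)) := Fin.ext_iff
  split_ifs <;> simp_all

/-- For an `m × 2` integer matrix `A` and `n ≥ 1`, every square submatrix of
`A ⊗ D(K_n)` of order at least `2n - 1` has determinant zero. -/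
theorem det_large_submatrix_eq_zero (m n : ℕ) (hn : 1 ≤ n) (A : Matrix (Fin m) (Fin 2) ℤ)
    (l : ℕ) (hl : 2 * n - 1 ≤ l)
    (f : Fin l → Fin m × Fin n) (g : Fin l → Fin 2 × CompEdge n)
    (hf : Function.Injective f) (hg : Function.Injective g) :
    ((A ⊗ₖ incK n).submatrix f g).det = 0 := by
  -- work over ℚ
  set Aq : Matrix (Fin m) (Fin 2) ℚ := A.map (Int.cast : ℤ → ℚ) with hAq
  set Dq : Matrix (Fin n) (CompEdge n) ℚ := (incK n).map (Int.cast : ℤ → ℚ) with hDq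
  set N : Matrix (Fin m × Fin n) (Fin 2 × CompEdge n) ℚ := Aq ⊗ₖ Dq with hN
  have hmap : ((A ⊗ₖ incK n).submatrix f g).map (Int.cast : ℤ → ℚ) = N.submatrix f g := by
    ext k k'
    simp [hN, hAq, hDq, Matrix.submatrix_apply, Matrix.map_apply, kroneckerMap_apply]
  -- enough to show the ℚ-determinant vanishes
  suffices hq : (N.submatrix f g).det = 0 by
    have hcast := (Int.castRingHom ℚ).map_det ((A ⊗ₖ incK n).submatrix f g)
    rw [RingHom.mapMatrix_apply] at hcast
    rw [show ((A ⊗ₖ incK n).submatrix f g).map (Int.castRingHom ℚ) = N.submatrix f g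
          from hmap] at hcast
    have h0 : ((((A ⊗ₖ incK n).submatrix f g).det : ℤ) : ℚ) = 0 := by
      simpa using hcast.trans hq
    exact_mod_cast h0
  by_contra hdet
  -- the submatrix is a unit, so its rank is l
  have hunit : IsUnit (N.submatrix f g) :=
    (Matrix.isUnit_iff_isUnit_det _).2 (isUnit_iff_ne_zero.2 hdet)
  have hrank_eq : (N.submatrix f g).rank = l := by
    rw [Matrix.rank_of_isUnit _ hunit, Fintype.card_fin]
  -- submatrix = Q * N * P
  set Q : Matrix (Fin l) (Fin m × Fin n) ℚ := fun k r => if f k = r then 1 else 0 with hQ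
  set P : Matrix (Fin 2 × CompEdge n) (Fin l) ℚ := fun c k => if g k = c then 1 else 0 with hP
  have hsub : N.submatrix f g = Q * N * P := by
    ext k k'
    simp only [Matrix.submatrix_apply, Matrix.mul_apply]
    simp [hQ, hP, Matrix.mul_apply, ite_mul, mul_ite, Finset.sum_ite_eq, Finset.sum_ite_eq']
  -- rank bound: rank N ≤ 2 * (n - 1)
  have hNfac : N = (Aq ⊗ₖ Fmat n) * ((1 : Matrix (Fin 2) (Fin 2) ℚ) ⊗ₖ Gmat n) := by
    rw [hN, hDq, incK_factor, ← Matrix.mul_kronecker_mul, Matrix.mul_one]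
  have hrankN : N.rank ≤ 2 * (n - 1) := by
    rw [hNfac]
    calc ((Aq ⊗ₖ Fmat n) * ((1 : Matrix (Fin 2) (Fin 2) ℚ) ⊗ₖ Gmat n)).rank
        ≤ (Aq ⊗ₖ Fmat n).rank := Matrix.rank_mul_le_left _ _
      _ ≤ Fintype.card (Fin 2 × Fin (n - 1)) := Matrix.rank_le_card_width _
      _ = 2 * (n - 1) := by simp
  have hranksub : (N.submatrix f g).rank ≤ 2 * (n - 1) := by
    rw [hsub]
    calc (Q * N * P).rank ≤ (Q * N).rank := Matrix.rank_mul_le_left _ _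
      _ ≤ N.rank := Matrix.rank_mul_le_right _ _
      _ ≤ 2 * (n - 1) := hrankN
  omega
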